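/- Let U_1, ..., U_r and V_1, ..., V_s be vector subspaces of a finite-dimensional space over a finite field K, with the U_i pairwise distinct, the V_j pairwise distinct, and no U_i equal to any V_j. If there exist positive reals a_1,...,a_r and b_1,...,b_s such that the functions ∑ a_i·1_{U_i} and ∑ b_j·1_{V_j} are equal pointwise, then max(r, s) > |K|. -/

import Mathlib

open Finset in
/-- In a nontrivial finite module over a finite field, the cardinality is at least `|K|`. -/
lemma card_K_le_card {K V : Type*} [Field K] [Fintype K] [AddCommGroup V] [Module K V]
    [Finite V] [Nontrivial V] : Fintype.card K ≤ Nat.card V := by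
  obtain ⟨y, hy⟩ := exists_ne (0 : V)
  have hinj : Function.Injective fun c : K => c • y := smul_left_injective K hy
  calc Fintype.card K = Nat.card K := (Nat.card_eq_fintype_card).symm
    _ ≤ Nat.card V := Nat.card_le_card_of_injective _ hinj

/-- A vector space over a finite field `K` cannot be covered by at most `|K|` proper
subspaces. -/
lemma cover_lemma {K W : Type*} [Field K] [Fintype K] [AddCommGroup W] [Module K W]
    [FiniteDimensional K W] {s : ℕ} (hs : 1 ≤ s) (hsq : s ≤ Fintype.card K)
    (M : Submodule K W) (P : Fin s → Submodule K W) (hP : ∀ j, P j ⊓ M < M) :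
    ∃ w ∈ M, ∀ j, w ∉ P j := by
  by_contra hcon
  push_neg at hcon
  have hfinW : Finite W := Module.finite_of_finite K
  classical
  haveI : Fintype W := Fintype.ofFinite W
  set q := Fintype.card K with hqdef
  have hq2 : 2 ≤ q := Fintype.one_lt_card
  -- cardinalities
  set m := Set.ncard (M : Set W) with hmdef
  set c : Fin s → ℕ := fun j => Set.ncard ((P j ⊓ M : Submodule K W) : Set W) with hcdef
  have hnatcard : ∀ (N : Submodule K W), Nat.card N = Set.ncard (N : Set W) := by
    intro N
    rw [← Nat.card_coe_set_eq]
    rfl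
  -- each `P j ⊓ M` has at most `m / q` elements
  have hcm : ∀ j, q * c j ≤ m := by
    intro j
    have hle : P j ⊓ M ≤ M := inf_le_right
    set Q : Submodule K M := (P j ⊓ M).comap M.subtype with hQ
    have hcardQ : Nat.card Q = c j := by
      show Nat.card Q = Set.ncard (((P j ⊓ M) : Submodule K W) : Set W)
      rw [← hnatcard]
      exact Nat.card_congr (Submodule.comapSubtypeEquivOfLe hle).toEquiv
    have hQtop : Q < ⊤ := by
      rcases lt_or_eq_of_le (le_top : Q ≤ ⊤) with h | h
      · exact h
      · exfalso
        have : M ≤ P j ⊓ M := by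
          rw [← Submodule.comap_subtype_eq_top, ← h]
        exact (hP j).ne (le_antisymm hle this)
    haveI : Nontrivial (M ⧸ Q) := (Submodule.Quotient.nontrivial_iff (p := Q)).mpr hQtop.ne
    have hquot : q ≤ Nat.card (M ⧸ Q) := card_K_le_card
    have hdecomp : Nat.card M = Nat.card Q * Nat.card (M ⧸ Q) :=
      Submodule.card_eq_card_quotient_mul_card Q
    have : q * c j ≤ Nat.card (M ⧸ Q) * Nat.card Q := by
      apply Nat.mul_le_mul hquot (le_of_eq hcardQ.symm)
    calc q * c j ≤ Nat.card (M ⧸ Q) * Nat.card Q := this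
      _ = Nat.card M := by rw [hdecomp, mul_comm]
      _ = m := by rw [hnatcard]
  -- M is nontrivial, so m ≥ q
  have hMne : ∃ x ∈ M, x ≠ (0 : W) := by
    by_contra h
    push_neg at h
    have hbot : M = ⊥ := by
      ext x
      simp only [Submodule.mem_bot]
      constructor
      · intro hx; exact h x hx
      · rintro rfl; exact M.zero_mem
    have := hP ⟨0, hs⟩
    rw [hbot] at this
    simp at this
  have hqm : q ≤ m := by
    obtain ⟨x, hxM, hx0⟩ := hMne
    haveI : Nontrivial M := ⟨⟨⟨x, hxM⟩, 0, by simp [hx0]⟩⟩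
    calc q ≤ Nat.card M := card_K_le_card
      _ = m := by rw [hnatcard]
  -- counting: the nonzero elements of M are covered by the nonzero elements of the P j ⊓ M
  set G : Finset W := ((M : Set W) \ {0}).toFinset with hG
  set F : Fin s → Finset W := fun j =>
    (((P j ⊓ M : Submodule K W) : Set W) \ {0}).toFinset with hF
  have hsub : G ⊆ Finset.univ.biUnion F := by
    intro w hw
    rw [hG, Set.mem_toFinset] at hw
    obtain ⟨j, hj⟩ := hcon w hw.1
    apply Finset.mem_biUnion.mpr ⟨j, Finset.mem_univ j, ?_⟩
    rw [hF, Set.mem_toFinset]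
    exact ⟨Submodule.mem_inf.mpr ⟨hj, hw.1⟩, hw.2⟩
  have hGcard : G.card = m - 1 := by
    show ((M : Set W) \ {0}).toFinset.card = m - 1
    rw [← Set.ncard_eq_toFinset_card']
    rw [Set.ncard_diff_singleton_of_mem (M.zero_mem)]
  have hFcard : ∀ j, (F j).card = c j - 1 := by
    intro j
    show (((P j ⊓ M : Submodule K W) : Set W) \ {0}).toFinset.card = c j - 1
    rw [← Set.ncard_eq_toFinset_card']
    rw [Set.ncard_diff_singleton_of_mem ((P j ⊓ M).zero_mem)]
  have hsum : m - 1 ≤ ∑ j, (c j - 1) := by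
    calc m - 1 = G.card := hGcard.symm
      _ ≤ (Finset.univ.biUnion F).card := Finset.card_le_card hsub
      _ ≤ ∑ j, (F j).card := Finset.card_biUnion_le
      _ = ∑ j, (c j - 1) := Finset.sum_congr rfl (fun j _ => hFcard j)
  -- arithmetic contradiction
  have hterm : ∀ j, q * (c j - 1) ≤ m - q := by
    intro j
    have h1 : q * (c j - 1) = q * c j - q := by rw [Nat.mul_sub, mul_one]
    rw [h1]
    exact Nat.sub_le_sub_right (hcm j) q
  have hfinal : q * (m - 1) ≤ q * (m - q) := by
    calc q * (m - 1) ≤ q * ∑ j, (c j - 1) := Nat.mul_le_mul_left q hsum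
      _ = ∑ j, q * (c j - 1) := Finset.mul_sum _ _ _
      _ ≤ ∑ _j : Fin s, (m - q) := Finset.sum_le_sum (fun j _ => hterm j)
      _ = s * (m - q) := by rw [Finset.sum_const, Finset.card_univ, Fintype.card_fin,
        smul_eq_mul]
      _ ≤ q * (m - q) := Nat.mul_le_mul_right _ hsq
  have : m - 1 ≤ m - q := Nat.le_of_mul_le_mul_left hfinal (by omega)
  omega

/-- Key step: if `U i` is maximal (not below any `V j`), we derive a contradiction. -/
lemma aux_lemma {K W : Type*} [Field K] [Fintype K] [AddCommGroup W] [Module K W]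
    [FiniteDimensional K W] {r s : ℕ} (hs : 1 ≤ s) (hsq : s ≤ Fintype.card K)
    (U : Fin r → Submodule K W) (V : Fin s → Submodule K W)
    (a : Fin r → ℝ) (b : Fin s → ℝ)
    (ha : ∀ i, 0 < a i) (hb : ∀ j, 0 < b j)
    (heq : ∀ w : W,
      ∑ i, Set.indicator (U i : Set W) (fun _ => a i) w =
      ∑ j, Set.indicator (V j : Set W) (fun _ => b j) w)
    (i : Fin r) (hmax : ∀ j, ¬ U i ≤ V j) : False := by
  have hP : ∀ j, V j ⊓ U i < U i := by
    intro j
    rcases lt_or_eq_of_le (inf_le_right : V j ⊓ U i ≤ U i) with h | h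
    · exact h
    · exact absurd (inf_eq_right.mp h) (hmax j)
  obtain ⟨w, hwU, hwV⟩ := cover_lemma hs hsq (U i) V hP
  have hR : ∑ j, Set.indicator (V j : Set W) (fun _ => b j) w = 0 :=
    Finset.sum_eq_zero fun j _ => Set.indicator_of_notMem (by simpa using hwV j) _
  have h1 : Set.indicator (U i : Set W) (fun _ => a i) w = a i :=
    Set.indicator_of_mem (by simpa using hwU) _
  have h2 : a i ≤ ∑ i', Set.indicator (U i' : Set W) (fun _ => a i') w := by
    rw [← h1]
    exact Finset.single_le_sum
      (f := fun i' => Set.indicator (U i' : Set W) (fun _ => a i') w)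
      (fun i' _ => Set.indicator_nonneg (fun _ _ => (ha i').le) w) (Finset.mem_univ i)
  rw [heq w, hR] at h2
  linarith [ha i]

theorem stmt_1 (K W : Type*) [Field K] [Fintype K]
    [AddCommGroup W] [Module K W] [FiniteDimensional K W]
    (r s : ℕ) (hr : 1 ≤ r) (hs : 1 ≤ s)
    (U : Fin r → Submodule K W) (V : Fin s → Submodule K W)
    (hUinj : Function.Injective U) (hVinj : Function.Injective V)
    (hdisj : ∀ i j, U i ≠ V j)
    (a : Fin r → ℝ) (b : Fin s → ℝ)
    (ha : ∀ i, 0 < a i) (hb : ∀ j, 0 < b j)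
    (heq : ∀ w : W,
      ∑ i, Set.indicator (U i : Set W) (fun _ => a i) w =
      ∑ j, Set.indicator (V j : Set W) (fun _ => b j) w) :
    max r s > Fintype.card K := by
  by_contra hcon
  push_neg at hcon
  have hr' : r ≤ Fintype.card K := le_trans (le_max_left r s) hcon
  have hs' : s ≤ Fintype.card K := le_trans (le_max_right r s) hcon
  set S : Set (Submodule K W) := Set.range U ∪ Set.range V with hS
  have hfin : S.Finite := (Set.finite_range U).union (Set.finite_range V)
  have hne : S.Nonempty := ⟨U ⟨0, hr⟩, Or.inl (Set.mem_range_self _)⟩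
  obtain ⟨M, hMS, hmax'⟩ := Set.Finite.exists_maximalFor id S hfin hne
  have hmax : ∀ a' ∈ S, id M ≤ id a' → id M = id a' := fun a' h h' => le_antisymm h' (hmax' h h')
  simp only [id] at hmax
  rcases hMS with ⟨i, rfl⟩ | ⟨j, rfl⟩
  · refine aux_lemma hs hs' U V a b ha hb heq i (fun j hle => ?_)
    exact hdisj i j (hmax (V j) (Or.inr (Set.mem_range_self j)) hle)
  · refine aux_lemma hr hr' V U b a hb ha (fun w => (heq w).symm) j (fun i hle => ?_)
    exact hdisj i j (hmax (U i) (Or.inl (Set.mem_range_self i)) hle).symm
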